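/- With K the closed unit disk and f(r,θ) = (r/2,θ), g(r,θ) = (r, 2θ mod 2π) as above, the sequence y_m = (1, π/2^m) (in polar coordinates) satisfies ‖x − y_m‖ = [2(1 − cos(π/2^m))]^{1/2} → 0 as m → ∞, where x = (1,0), while for all n, m ∈ ℕ, ‖f^{n+1} g^m(x) − f^{n+1} g^m(y_m)‖ = 1/2^n. -/

import Mathlib

open Metric Real Filter

/-- `f(r,θ) = (r/2, θ)` in polar coordinates, i.e. scaling by `1/2`. -/
noncomputable def fmap : EuclideanSpace ℝ (Fin 2) → EuclideanSpace ℝ (Fin 2) :=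
  fun p => (1 / 2 : ℝ) • p

open Classical in
/-- `g(r,θ) = (r, 2θ mod 2π)` in polar coordinates; in Cartesian coordinates this is the
angle-doubling map `p ↦ ‖p‖⁻¹ • (p₀² − p₁², 2 p₀ p₁)` (and `g(0) = 0`). -/
noncomputable def gmap : EuclideanSpace ℝ (Fin 2) → EuclideanSpace ℝ (Fin 2) :=
  fun p => if p = 0 then 0 else ‖p‖⁻¹ • WithLp.toLp 2 ![(p 0) ^ 2 - (p 1) ^ 2, 2 * (p 0) * (p 1)]

/-- The point with polar coordinates `(r, θ)`. -/
noncomputable def pt (r θ : ℝ) : EuclideanSpace ℝ (Fin 2) := WithLp.toLp 2 ![r * Real.cos θ, r * Real.sin θ]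


lemma pt_apply0 (r θ : ℝ) : pt r θ 0 = r * Real.cos θ := rfl
lemma pt_apply1 (r θ : ℝ) : pt r θ 1 = r * Real.sin θ := rfl

lemma norm_pt_one (θ : ℝ) : ‖pt 1 θ‖ = 1 := by
  rw [EuclideanSpace.norm_eq, Fin.sum_univ_two]
  have : ‖pt 1 θ 0‖ ^ 2 + ‖pt 1 θ 1‖ ^ 2 = 1 := by
    rw [pt_apply0, pt_apply1, Real.norm_eq_abs, Real.norm_eq_abs, sq_abs, sq_abs]
    nlinarith [sin_sq_add_cos_sq θ]
  rw [this, Real.sqrt_one]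

lemma pt_one_ne_zero (θ : ℝ) : pt 1 θ ≠ 0 := by
  intro h
  have := norm_pt_one θ
  rw [h] at this
  simp at this

lemma gmap_pt (θ : ℝ) : gmap (pt 1 θ) = pt 1 (2 * θ) := by
  rw [gmap, if_neg (pt_one_ne_zero θ), norm_pt_one]
  ext i
  fin_cases i <;>
    simp [pt_apply0, pt_apply1, pt, Real.cos_two_mul', Real.sin_two_mul] <;> ring

lemma gmap_iter (m : ℕ) (θ : ℝ) : gmap^[m] (pt 1 θ) = pt 1 (2 ^ m * θ) := by
  induction m with
  | zero => simp [pt]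
  | succ k ih =>
      rw [Function.iterate_succ_apply', ih, gmap_pt]
      ring_nf

lemma fmap_iter (k : ℕ) (p : EuclideanSpace ℝ (Fin 2)) :
    fmap^[k] p = ((1 / 2 : ℝ) ^ k) • p := by
  induction k with
  | zero => simp
  | succ j ih => rw [Function.iterate_succ_apply', ih, fmap, smul_smul]; ring_nf

lemma norm_pt_sub (α : ℝ) :
    ‖pt 1 0 - pt 1 α‖ = Real.sqrt (2 * (1 - Real.cos α)) := by
  rw [EuclideanSpace.norm_eq]
  congr 1
  have h0 : (pt 1 0 - pt 1 α) 0 = 1 - Real.cos α := by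
    simp [pt_apply0]
  have h1 : (pt 1 0 - pt 1 α) 1 = -Real.sin α := by
    simp [pt_apply1]
  rw [Fin.sum_univ_two, h0, h1, Real.norm_eq_abs, Real.norm_eq_abs, sq_abs, sq_abs]
  nlinarith [sin_sq_add_cos_sq α]

/-- with `x = (1,0)` and `y_m = (1, π/2^m)` in polar coordinates,
`‖x − y_m‖ = [2(1 − cos(π/2^m))]^{1/2} → 0`, while
`‖f^{n+1} g^m (x) − f^{n+1} g^m (y_m)‖ = 1/2^n` for all `n, m`. -/
theorem distance_estimates :
    (∀ m : ℕ, ‖pt 1 0 - pt 1 (π / 2 ^ m)‖ = Real.sqrt (2 * (1 - Real.cos (π / 2 ^ m)))) ∧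
    Tendsto (fun m : ℕ => ‖pt 1 0 - pt 1 (π / 2 ^ m)‖) atTop (nhds 0) ∧
    (∀ n m : ℕ,
      ‖fmap^[n + 1] (gmap^[m] (pt 1 0)) - fmap^[n + 1] (gmap^[m] (pt 1 (π / 2 ^ m)))‖
        = 1 / 2 ^ n) := by
  refine ⟨fun m => norm_pt_sub _, ?_, ?_⟩
  · have h1 : Tendsto (fun m : ℕ => π / 2 ^ m) atTop (nhds 0) := by
      exact Tendsto.div_atTop tendsto_const_nhds
        (tendsto_pow_atTop_atTop_of_one_lt (by norm_num : (1:ℝ) < 2))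
    have h2 : Tendsto (fun m : ℕ => Real.sqrt (2 * (1 - Real.cos (π / 2 ^ m)))) atTop (nhds 0) := by
      have : Tendsto (fun α : ℝ => Real.sqrt (2 * (1 - Real.cos α))) (nhds 0) (nhds 0) := by
        have hc : Continuous (fun α : ℝ => Real.sqrt (2 * (1 - Real.cos α))) := by
          continuity
        have := hc.tendsto 0
        simpa using this
      exact this.comp h1
    exact h2.congr (fun m => (norm_pt_sub _).symm)
  · intro n m
    have hx : gmap^[m] (pt 1 0) = pt 1 0 := by rw [gmap_iter]; ring_nf
    have hy : gmap^[m] (pt 1 (π / 2 ^ m)) = pt 1 π := by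
      rw [gmap_iter]
      congr 1
      field_simp
    rw [hx, hy, fmap_iter, fmap_iter, ← smul_sub, norm_smul]
    have : ‖pt 1 0 - pt 1 π‖ = 2 := by
      rw [norm_pt_sub]
      simp [Real.cos_pi]
      rw [show (1:ℝ) + 1 = 2 by norm_num]
      exact Real.mul_self_sqrt (by norm_num)
    rw [this]
    simp [abs_of_pos]
    rw [pow_succ]
    ring
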